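/- Let H be a length heart in a triangulated category D, S a subset of the simple objects of H, and K = (S^⊥ ∩ H) * ⟨S⟩[-1] the right simple tilt of H at S. Then for each s ∈ S, the object s[-1] is a simple object of the abelian category K. -/

import Mathlib

open CategoryTheory Category Limits Pretriangulated

universe v u

namespace SMPaper

variable {C : Type u} [Category.{v} C] [Preadditive C] [HasZeroObject C] [HasShift C ℤ]
  [∀ n : ℤ, (shiftFunctor C n).Additive] [Pretriangulated C]

/-- The image of a set of objects under the `n`-th shift, closed under isomorphism. -/
def shiftSet (S : Set C) (n : ℤ) : Set C :=
  {d | ∃ s ∈ S, Nonempty ((shiftFunctor C n).obj s ≅ d)}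

/-- The extension product `A * B`: objects `d` fitting in a triangle `a → d → b → a[1]`. -/
def star (A B : Set C) : Set C :=
  {d | ∃ (a b : C) (f : a ⟶ d) (g : d ⟶ b) (h : b ⟶ (shiftFunctor C (1 : ℤ)).obj a),
    a ∈ A ∧ b ∈ B ∧ Triangle.mk f g h ∈ (distTriang C)}

/-- `Hom(A, B) = 0`. -/
def homOrth (A B : Set C) : Prop :=
  ∀ ⦃a : C⦄, a ∈ A → ∀ ⦃b : C⦄, b ∈ B → ∀ f : a ⟶ b, f = 0

/-- Right perpendicular `S^⊥`. -/
def rPerp (S : Set C) : Set C := {d | ∀ s ∈ S, ∀ f : s ⟶ d, f = 0}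

/-- Left perpendicular `^⊥S`. -/
def lPerp (S : Set C) : Set C := {d | ∀ s ∈ S, ∀ f : d ⟶ s, f = 0}

def isoClosure (S : Set C) : Set C := {d | ∃ s ∈ S, Nonempty (s ≅ d)}

/-- The extension closure of a set of objects. -/
inductive ExtClosureP (S : Set C) : C → Prop
  | of (s : C) : s ∈ S → ExtClosureP S s
  | zero (z : C) : IsZero z → ExtClosureP S z
  | iso (x y : C) : (x ≅ y) → ExtClosureP S x → ExtClosureP S y
  | ext (a d b : C) (f : a ⟶ d) (g : d ⟶ b) (h : b ⟶ (shiftFunctor C (1 : ℤ)).obj a) :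
      Triangle.mk f g h ∈ (distTriang C) → ExtClosureP S a → ExtClosureP S b → ExtClosureP S d

def extClosure (S : Set C) : Set C := {d | ExtClosureP S d}

/-- `⟨S⟩[i] * ⟨S⟩[i-1] * ⋯ * ⟨S⟩[i-n]`. -/
def prodDown (S : Set C) : ℤ → ℕ → Set C
  | i, 0 => shiftSet (extClosure S) i
  | i, n + 1 => star (shiftSet (extClosure S) i) (prodDown S (i - 1) n)

/-- `susp S = ⋃_{n ≥ 0} ⟨S⟩[n] * ⋯ * ⟨S⟩[0]`. -/
def suspSet (S : Set C) : Set C := {d | ∃ n : ℕ, d ∈ prodDown S n n}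

/-- `cosusp S = ⋃_{n ≥ 0} ⟨S⟩[0] * ⋯ * ⟨S⟩[-n]`. -/
def cosuspSet (S : Set C) : Set C := {d | ∃ n : ℕ, d ∈ prodDown S 0 n}

/-- `cosusp (S[-1]) = ⋃_{n ≥ 0} ⟨S⟩[-1] * ⋯ * ⟨S⟩[-1-n]`. -/
def cosuspNeg (S : Set C) : Set C := {d | ∃ n : ℕ, d ∈ prodDown S (-1) n}

/-- A t-structure `(X, Y)`: full (iso-closed, containing zero) subcategories with
`Hom(X, Y) = 0`, `D = X * Y` and `X[1] ⊆ X`. -/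
structure IsTStructure (X Y : Set C) : Prop where
  isoX : ∀ ⦃x y : C⦄, (x ≅ y) → x ∈ X → y ∈ X
  isoY : ∀ ⦃x y : C⦄, (x ≅ y) → x ∈ Y → y ∈ Y
  zeroX : ∀ z : C, IsZero z → z ∈ X
  zeroY : ∀ z : C, IsZero z → z ∈ Y
  hom : homOrth X Y
  gen : ∀ d : C, d ∈ star X Y
  shift : shiftSet X 1 ⊆ X

/-- A co-t-structure `(W, X)`. -/
structure IsCoTStructure (W X : Set C) : Prop where
  isoW : ∀ ⦃x y : C⦄, (x ≅ y) → x ∈ W → y ∈ W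
  isoX : ∀ ⦃x y : C⦄, (x ≅ y) → x ∈ X → y ∈ X
  zeroW : ∀ z : C, IsZero z → z ∈ W
  zeroX : ∀ z : C, IsZero z → z ∈ X
  hom : homOrth W X
  gen : ∀ d : C, d ∈ star W X
  shift : shiftSet W (-1) ⊆ W

/-- The heart `X ∩ Y[1]` of a t-structure. -/
def heart (X Y : Set C) : Set C := X ∩ shiftSet Y 1

/-- Boundedness of a torsion pair/t-structure. -/
def IsBoundedTS (X Y : Set C) : Prop :=
  ∀ d : C, (∃ n : ℤ, d ∈ shiftSet X n) ∧ (∃ n : ℤ, d ∈ shiftSet Y n)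

/-- A torsion pair `(T, F)` in the heart `H`: `Hom(T, F) = 0` and every object of `H`
is an extension of an object of `F` by an object of `T`. -/
structure IsTorsionPairIn (H T F : Set C) : Prop where
  isoT : ∀ ⦃x y : C⦄, (x ≅ y) → x ∈ T → y ∈ T
  isoF : ∀ ⦃x y : C⦄, (x ≅ y) → x ∈ F → y ∈ F
  subT : T ⊆ H
  subF : F ⊆ H
  hom : homOrth T F
  gen : H ⊆ star T F

/-- `f : x → d` is a right `S`-approximation. -/
def IsRightApprox (S : Set C) {x d : C} (f : x ⟶ d) : Prop :=
  x ∈ S ∧ ∀ ⦃x' : C⦄, x' ∈ S → ∀ g : x' ⟶ d, ∃ h : x' ⟶ x, h ≫ f = g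

/-- `f : d → x` is a left `S`-approximation. -/
def IsLeftApprox (S : Set C) {d x : C} (f : d ⟶ x) : Prop :=
  x ∈ S ∧ ∀ ⦃x' : C⦄, x' ∈ S → ∀ g : d ⟶ x', ∃ h : x ⟶ x', f ≫ h = g

def RightMinimal {x d : C} (f : x ⟶ d) : Prop :=
  ∀ β : x ⟶ x, β ≫ f = f → IsIso β

def LeftMinimal {d x : C} (f : d ⟶ x) : Prop :=
  ∀ β : x ⟶ x, f ≫ β = f → IsIso β

def HasRightApprox (S : Set C) (d : C) : Prop := ∃ (x : C) (f : x ⟶ d), IsRightApprox S f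

def HasLeftApprox (S : Set C) (d : C) : Prop := ∃ (x : C) (f : d ⟶ x), IsLeftApprox S f

def ContravariantlyFiniteIn (S A : Set C) : Prop := ∀ d ∈ A, HasRightApprox S d

def CovariantlyFiniteIn (S A : Set C) : Prop := ∀ d ∈ A, HasLeftApprox S d

/-- An orthogonal collection (semibrick). -/
structure IsOrthogonal (U : Set C) : Prop where
  nonzero : ∀ u ∈ U, ¬ IsZero u
  hom : ∀ ⦃u v : C⦄, u ∈ U → v ∈ U → ¬ Nonempty (u ≅ v) → ∀ f : u ⟶ v, f = 0
  div : ∀ u ∈ U, ∀ f : u ⟶ u, f = 0 ∨ IsIso f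

/-- An `∞`-orthogonal collection. -/
def IsInfOrthogonal (U : Set C) : Prop :=
  IsOrthogonal U ∧ ∀ ⦃u v : C⦄, u ∈ U → v ∈ U → ∀ m : ℤ, 0 < m →
    ∀ f : (shiftFunctor C m).obj u ⟶ v, f = 0

/-- A simple-minded collection. -/
def IsSMC (U : Set C) : Prop :=
  IsInfOrthogonal U ∧ ∀ d : C, ∃ i j : ℤ, j ≤ i ∧ d ∈ prodDown U i (i - j).toNat

/-- `m` is a right mutation `∂_S(d)` of `d` with respect to `S`. -/
def IsRightMutation (S : Set C) (d m : C) : Prop :=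
  (d ∈ S ∧ Nonempty (d ≅ m)) ∨
  (d ∉ S ∧ ∃ (s : C) (f : s ⟶ (shiftFunctor C (1 : ℤ)).obj d)
      (g : (shiftFunctor C (1 : ℤ)).obj d ⟶ m) (h : m ⟶ (shiftFunctor C (1 : ℤ)).obj s),
    IsRightApprox (extClosure S) f ∧ RightMinimal f ∧ Triangle.mk f g h ∈ (distTriang C))

/-- `m` is a left mutation `∂⁻_S(d)` of `d` with respect to `S`. -/
def IsLeftMutation (S : Set C) (d m : C) : Prop :=
  (d ∈ S ∧ Nonempty (d ≅ m)) ∨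
  (d ∉ S ∧ ∃ (s : C) (g : m ⟶ (shiftFunctor C (-1 : ℤ)).obj d)
      (f : (shiftFunctor C (-1 : ℤ)).obj d ⟶ s) (h : s ⟶ (shiftFunctor C (1 : ℤ)).obj m),
    IsLeftApprox (extClosure S) f ∧ LeftMinimal f ∧ Triangle.mk g f h ∈ (distTriang C))

def rightMutationSet (S U : Set C) : Set C := {m | ∃ u ∈ U, IsRightMutation S u m}

def leftMutationSet (S U : Set C) : Set C := {m | ∃ u ∈ U, IsLeftMutation S u m}

/-- `h` is a simple object of the heart `H`. -/
def IsSimpleIn (H : Set C) (h : C) : Prop :=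
  h ∈ H ∧ ¬ IsZero h ∧
    ∀ (a b : C) (f : a ⟶ h) (g : h ⟶ b) (w : b ⟶ (shiftFunctor C (1 : ℤ)).obj a),
      a ∈ H → b ∈ H → Triangle.mk f g w ∈ (distTriang C) → IsZero a ∨ IsZero b

def simplesOf (H : Set C) : Set C := {h | IsSimpleIn H h}

/-- A heart is a length category iff every object has a finite composition series, i.e.
lies in the extension closure of the simple objects. -/
def HeartIsLength (H : Set C) : Prop := H ⊆ extClosure (simplesOf H)

/-- A bounded t-structure with length heart. -/
def IsLengthHeart (X Y : Set C) : Prop :=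
  IsTStructure X Y ∧ IsBoundedTS X Y ∧ HeartIsLength (heart X Y)

/-- An `S`-mutation pair `(A, B)`. -/
def IsSMutationPair (S A B : Set C) : Prop :=
  isoClosure A =
    lPerp S ∩ rPerp S ∩ lPerp (shiftSet S (-1)) ∩ shiftSet (star (extClosure S) B) (-1) ∧
  isoClosure B =
    lPerp S ∩ rPerp S ∩ rPerp (shiftSet S 1) ∩ shiftSet (star A (extClosure S)) 1

/-- The conditions of the SMC Setup. -/
def SMCSetup (S : Set C) : Prop :=
  CovariantlyFiniteIn (extClosure S)
    {d | ∀ s ∈ S, ∀ m : ℤ, m < 0 → ∀ f : d ⟶ (shiftFunctor C m).obj s, f = 0} ∧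
  ContravariantlyFiniteIn (extClosure S)
    {d | ∀ s ∈ S, ∀ m : ℤ, 0 < m → ∀ f : (shiftFunctor C m).obj s ⟶ d, f = 0} ∧
  (∀ d : C, ∃ N : ℤ, ∀ m : ℤ, m ≤ N → ∀ s ∈ S, ∀ f : d ⟶ (shiftFunctor C m).obj s, f = 0) ∧
  (∀ d : C, ∃ N : ℤ, ∀ m : ℤ, N ≤ m → ∀ s ∈ S, ∀ f : (shiftFunctor C m).obj s ⟶ d, f = 0)

/-- `f : p → h` is an epimorphism in the heart `H`, i.e. fits in a triangle
`a → p → h → a[1]` with `a ∈ H`. -/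
def IsEpiIn (H : Set C) {p h : C} (f : p ⟶ h) : Prop :=
  ∃ (a : C) (i : a ⟶ p) (w : h ⟶ (shiftFunctor C (1 : ℤ)).obj a),
    a ∈ H ∧ Triangle.mk i f w ∈ (distTriang C)

/-- `f : h → i` is a monomorphism in the heart `H`. -/
def IsMonoIn (H : Set C) {h i : C} (f : h ⟶ i) : Prop :=
  ∃ (b : C) (q : i ⟶ b) (w : b ⟶ (shiftFunctor C (1 : ℤ)).obj h),
    b ∈ H ∧ Triangle.mk f q w ∈ (distTriang C)

def IsProjectiveIn (H : Set C) (p : C) : Prop :=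
  p ∈ H ∧ ∀ ⦃x y : C⦄ (f : x ⟶ y), x ∈ H → y ∈ H → IsEpiIn H f →
    ∀ g : p ⟶ y, ∃ l : p ⟶ x, l ≫ f = g

def IsInjectiveIn (H : Set C) (i : C) : Prop :=
  i ∈ H ∧ ∀ ⦃x y : C⦄ (f : x ⟶ y), x ∈ H → y ∈ H → IsMonoIn H f →
    ∀ g : x ⟶ i, ∃ l : y ⟶ i, f ≫ l = g

def EnoughProjectivesIn (H : Set C) : Prop :=
  ∀ h ∈ H, ∃ (p : C) (f : p ⟶ h), IsProjectiveIn H p ∧ IsEpiIn H f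

def EnoughInjectivesIn (H : Set C) : Prop :=
  ∀ h ∈ H, ∃ (i : C) (f : h ⟶ i), IsInjectiveIn H i ∧ IsMonoIn H f



section Proof4

open ZeroObject

variable {X Y S : Set C}

private lemma eq_zero_of_comp_iso_hom {A B B' : C} (e : B ≅ B') {f : A ⟶ B}
    (h : f ≫ e.hom = 0) : f = 0 := by
  rw [← comp_id f, ← e.hom_inv_id, ← assoc, h, zero_comp]

private lemma vanish₂ {T : Triangle C} (hT : T ∈ distTriang C) {x : C}
    (h1 : ∀ r : x ⟶ T.obj₁, r = 0) (h3 : ∀ r : x ⟶ T.obj₃, r = 0)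
    (q : x ⟶ T.obj₂) : q = 0 := by
  obtain ⟨r, hr⟩ := Triangle.coyoneda_exact₂ _ hT q (h3 _)
  rw [hr, h1 r, zero_comp]

private lemma shift_one_mem_X (hT : IsTStructure X Y) {x : C} (hx : x ∈ X) :
    x⟦(1:ℤ)⟧ ∈ X :=
  hT.shift ⟨x, hx, ⟨Iso.refl _⟩⟩

private lemma shift_nonneg_mem_X (hT : IsTStructure X Y) :
    ∀ (n : ℤ), 0 ≤ n → ∀ {x : C}, x ∈ X → x⟦n⟧ ∈ X := by
  intro n hn x hx
  refine Int.leInduction (motive := fun n _ => ∀ x ∈ X, x⟦n⟧ ∈ X)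
    (fun x hx => hT.isoX ((shiftFunctorZero C ℤ).symm.app x) hx)
    (fun k _ ih x hx => hT.isoX ((shiftFunctorAdd' C k 1 (k+1) rfl).symm.app x)
      (shift_one_mem_X hT (ih x hx))) n hn x hx

private lemma hom_X_Y_shift (hT : IsTStructure X Y) {x y : C} (hx : x ∈ X) (hy : y ∈ Y)
    {n : ℤ} (hn : n ≤ 0) (f : x ⟶ y⟦n⟧) : f = 0 := by
  have e : (y⟦n⟧)⟦-n⟧ ≅ y :=
    (shiftFunctorAdd' C n (-n) 0 (by ring)).symm.app y ≪≫ (shiftFunctorZero C ℤ).app y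
  have h0 : (f⟦-n⟧') ≫ e.hom = 0 :=
    hT.hom (shift_nonneg_mem_X hT (-n) (by omega) hx) hy _
  have h1 : f⟦-n⟧' = 0 := eq_zero_of_comp_iso_hom e h0
  exact (shiftFunctor C (-n)).map_injective (by rw [h1, Functor.map_zero])

private lemma hom_X_Y_neg1_neg1 (hT : IsTStructure X Y) {x y : C} (hx : x ∈ X) (hy : y ∈ Y)
    (f : x ⟶ (y⟦(-1:ℤ)⟧)⟦(-1:ℤ)⟧) : f = 0 :=
  eq_zero_of_comp_iso_hom ((shiftFunctorAdd' C (-1) (-1) (-2) (by ring)).symm.app y)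
    (hom_X_Y_shift hT hx hy (by norm_num) _)

private lemma hom_X_heart_neg (hT : IsTStructure X Y) {x h : C} (hx : x ∈ X)
    (hh : h ∈ heart X Y) {n : ℤ} (hn : n ≤ -1) (f : x ⟶ h⟦n⟧) : f = 0 := by
  obtain ⟨hhX, y, hy, ⟨e⟩⟩ := hh
  have e2 : h⟦n⟧ ≅ y⟦1+n⟧ :=
    ((shiftFunctor C n).mapIso e).symm ≪≫ (shiftFunctorAdd' C 1 n (1+n) rfl).symm.app y
  exact eq_zero_of_comp_iso_hom e2 (hom_X_Y_shift hT hx hy (by omega) _)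

private lemma hom_X_heart_neg1_neg1 (hT : IsTStructure X Y) {x h : C} (hx : x ∈ X)
    (hh : h ∈ heart X Y) (f : x ⟶ (h⟦(-1:ℤ)⟧)⟦(-1:ℤ)⟧) : f = 0 :=
  eq_zero_of_comp_iso_hom ((shiftFunctorAdd' C (-1) (-1) (-2) (by ring)).symm.app h)
    (hom_X_heart_neg hT hx hh (by norm_num) _)

private lemma mem_X_of_vanish (hT : IsTStructure X Y) {d : C}
    (h : ∀ y ∈ Y, ∀ f : d ⟶ y, f = 0) : d ∈ X := by
  obtain ⟨x, y, m₁, m₂, m₃, hx, hy, hD⟩ := hT.gen d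
  have hm₂ : m₂ = 0 := h y hy m₂
  have hzy : IsZero y := by
    rw [IsZero.iff_id_eq_zero]
    obtain ⟨g, hg⟩ := Triangle.yoneda_exact₂ _ (rot_of_distTriang _ hD) (𝟙 y)
      (by erw [comp_id]; exact hm₂)
    erw [hg, (show g = 0 from hT.hom (shift_one_mem_X hT hx) hy g), comp_zero]; rfl
  have : IsIso m₁ := (Triangle.isZero₃_iff_isIso₁ _ hD).1 hzy
  exact hT.isoX (asIso m₁) hx

private lemma mem_Y_of_vanish (hT : IsTStructure X Y) {d : C}
    (h : ∀ x ∈ X, ∀ f : x ⟶ d, f = 0) : d ∈ Y := by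
  obtain ⟨x, y, m₁, m₂, m₃, hx, hy, hD⟩ := hT.gen d
  have hm₁ : m₁ = 0 := h x hx m₁
  have hz1 : IsZero (x⟦(1:ℤ)⟧) := by
    rw [IsZero.iff_id_eq_zero]
    obtain ⟨σ, hσ⟩ := Triangle.coyoneda_exact₃ _ (rot_of_distTriang _ hD)
      (𝟙 (x⟦(1:ℤ)⟧)) (by erw [id_comp]; erw [hm₁]; exact neg_eq_zero.mpr (Functor.map_zero _ _ _))
    erw [hσ, (show σ = 0 from hT.hom (shift_one_mem_X hT hx) hy σ), zero_comp]; rfl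
  have hzx : IsZero x := IsZero.of_iso ((shiftFunctor C (-1:ℤ)).map_isZero hz1)
    ((shiftFunctorCompIsoId C (1:ℤ) (-1:ℤ) (by ring)).symm.app x)
  have : IsIso m₂ := (Triangle.isZero₁_iff_isIso₂ _ hD).1 hzx
  exact hT.isoY (asIso m₂).symm hy

private lemma mem_heart_of (hT : IsTStructure X Y) {d : C} (hdX : d ∈ X)
    (hdY : d⟦(-1:ℤ)⟧ ∈ Y) : d ∈ heart X Y :=
  ⟨hdX, d⟦(-1:ℤ)⟧, hdY, ⟨(shiftFunctorCompIsoId C (-1:ℤ) (1:ℤ) (by ring)).app d⟩⟩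

private lemma vanish_obj₂_shift {T : Triangle C} (hT' : T ∈ distTriang C) {x : C}
    (h1 : ∀ r : x ⟶ T.obj₁⟦(-1:ℤ)⟧, r = 0) (h3 : ∀ r : x ⟶ T.obj₃⟦(-1:ℤ)⟧, r = 0)
    (q : x ⟶ T.obj₂⟦(-1:ℤ)⟧) : q = 0 := by
  have hsh : (Triangle.shiftFunctor C (-1)).obj T ∈ distTriang C := by
    simpa using Triangle.shift_distinguished T hT' (-1)
  exact vanish₂ hsh h1 h3 q

private lemma vanish_obj₁_shift {T : Triangle C} (hT' : T ∈ distTriang C) {x : C}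
    (h2 : ∀ r : x ⟶ T.obj₂⟦(-1:ℤ)⟧, r = 0)
    (h3 : ∀ r : x ⟶ (T.obj₃⟦(-1:ℤ)⟧)⟦(-1:ℤ)⟧, r = 0)
    (q : x ⟶ T.obj₁⟦(-1:ℤ)⟧) : q = 0 := by
  have hsh : (Triangle.shiftFunctor C (-1)).obj T ∈ distTriang C := by
    simpa using Triangle.shift_distinguished T hT' (-1)
  exact vanish₂ (inv_rot_of_distTriang _ hsh) h3 h2 q

/-- `j` is a monomorphism as tested by maps from objects of `X`. -/
private def XMono (X : Set C) {z t : C} (j : z ⟶ t) : Prop :=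
  ∀ x ∈ X, ∀ q : x ⟶ z, q ≫ j = 0 → q = 0

private lemma xMono_mor₂ {T : Triangle C} (hT' : T ∈ distTriang C)
    (h1 : ∀ x ∈ X, ∀ r : x ⟶ T.obj₁, r = 0) : XMono X T.mor₂ := by
  intro x hx q hq
  obtain ⟨r, hr⟩ := Triangle.coyoneda_exact₂ _ hT' q hq
  rw [hr, h1 x hx r, zero_comp]

private lemma xMono_mor₁ {T : Triangle C} (hT' : T ∈ distTriang C)
    (h1 : ∀ x ∈ X, ∀ r : x ⟶ T.obj₃⟦(-1:ℤ)⟧, r = 0) : XMono X T.mor₁ :=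
  xMono_mor₂ (inv_rot_of_distTriang _ hT') h1

private lemma xMono_mor₃ {T : Triangle C} (hT' : T ∈ distTriang C)
    (h1 : ∀ x ∈ X, ∀ r : x ⟶ T.obj₂, r = 0) : XMono X T.mor₃ :=
  xMono_mor₂ (rot_of_distTriang _ hT') h1

private lemma cone_mem_heart (hT : IsTStructure X Y) {z h c : C} (hz : z ∈ heart X Y)
    (hh : h ∈ heart X Y) {j : z ⟶ h} {g : h ⟶ c} {w : c ⟶ z⟦(1:ℤ)⟧}
    (hD : Triangle.mk j g w ∈ distTriang C) (hj : XMono X j) : c ∈ heart X Y := by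
  have hcX : c ∈ X := by
    refine mem_X_of_vanish hT (fun y hy f => ?_)
    obtain ⟨g', hg'⟩ := Triangle.yoneda_exact₃ _ hD f (hT.hom hh.1 hy _)
    erw [hg', (show g' = 0 from hT.hom (shift_one_mem_X hT hz.1) hy g'), comp_zero]; rfl
  refine mem_heart_of hT hcX (mem_Y_of_vanish hT ?_)
  intro x hx q
  have hsh : (Triangle.shiftFunctor C (-1)).obj (Triangle.mk j g w) ∈ distTriang C := by
    simpa using Triangle.shift_distinguished _ hD (-1)
  set ι := shiftFunctorCompIsoId C (-1:ℤ) (1:ℤ) (by ring) with hι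
  have hcomp : ((Triangle.shiftFunctor C (-1)).obj (Triangle.mk j g w)).mor₃ ≫
      (j⟦(-1:ℤ)⟧')⟦(1:ℤ)⟧' = 0 := by
    have h31 := comp_distTriang_mor_zero₃₁ _ hsh
    have hmor₁ : ((Triangle.shiftFunctor C (-1)).obj (Triangle.mk j g w)).mor₁
        = (-1:ℤ).negOnePow • j⟦(-1:ℤ)⟧' := rfl
    erw [hmor₁, Functor.map_units_smul, Linear.comp_units_smul] at h31
    exact (smul_eq_zero_iff_eq _).mp h31
  have hq' : (q ≫ ((Triangle.shiftFunctor C (-1)).obj (Triangle.mk j g w)).mor₃ ≫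
      ι.hom.app z) ≫ j = 0 := by
    have hnat : ι.hom.app z ≫ j = (j⟦(-1:ℤ)⟧')⟦(1:ℤ)⟧' ≫ ι.hom.app h := by
      have := ι.hom.naturality j
      simpa using this.symm
    erw [assoc, assoc]
    erw [hnat]
    erw [reassoc_of% hcomp]
    erw [zero_comp, comp_zero]
  have hq0 := hj x hx _ hq'
  have hqm : q ≫ ((Triangle.shiftFunctor C (-1)).obj (Triangle.mk j g w)).mor₃ = 0 := by
    have := congrArg (fun t => t ≫ ι.inv.app z) hq0
    erw [assoc, assoc, Iso.hom_inv_id_app, comp_id, zero_comp] at this; exact this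
  obtain ⟨r, hr⟩ := Triangle.coyoneda_exact₃ _ hsh q hqm
  erw [hr, hom_X_heart_neg hT hx hh (by norm_num : (-1:ℤ) ≤ -1) r, zero_comp]; rfl

private lemma heart_iso (hT : IsTStructure X Y) {x y : C} (e : x ≅ y)
    (hx : x ∈ heart X Y) : y ∈ heart X Y := by
  obtain ⟨hxX, y', hy', ⟨e'⟩⟩ := hx
  exact ⟨hT.isoX e hxX, y', hy', ⟨e' ≪≫ e⟩⟩

private lemma zero_mem_heart (hT : IsTStructure X Y) {z : C} (hz : IsZero z) :
    z ∈ heart X Y :=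
  ⟨hT.zeroX z hz, z, hT.zeroY z hz,
    ⟨IsZero.iso ((shiftFunctor C (1:ℤ)).map_isZero hz) hz⟩⟩

private lemma heart_ext (hT : IsTStructure X Y) {h1 d h2 : C} {f : h1 ⟶ d} {g : d ⟶ h2}
    {w : h2 ⟶ h1⟦(1:ℤ)⟧} (hD : Triangle.mk f g w ∈ distTriang C)
    (hh1 : h1 ∈ heart X Y) (hh2 : h2 ∈ heart X Y) : d ∈ heart X Y := by
  have hdX : d ∈ X := by
    refine mem_X_of_vanish hT (fun y hy r => ?_)
    obtain ⟨g', hg'⟩ := Triangle.yoneda_exact₂ _ hD r (hT.hom hh1.1 hy _)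
    erw [hg', (show g' = 0 from hT.hom hh2.1 hy g'), comp_zero]; rfl
  refine mem_heart_of hT hdX (mem_Y_of_vanish hT ?_)
  intro x hx q
  exact vanish_obj₂_shift hD
    (fun r => hom_X_heart_neg hT hx hh1 (by norm_num : (-1:ℤ) ≤ -1) r)
    (fun r => hom_X_heart_neg hT hx hh2 (by norm_num : (-1:ℤ) ≤ -1) r) q

private lemma extClosureP_mem_heart (hT : IsTStructure X Y)
    (hS : S ⊆ simplesOf (heart X Y)) :
    ∀ {t : C}, ExtClosureP S t → t ∈ heart X Y := by
  intro t ht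
  induction ht with
  | of s hs => exact (hS hs).1
  | zero z hz => exact zero_mem_heart hT hz
  | iso x y e hx ih => exact heart_iso hT e ih
  | ext a d b f g w hD ha hb iha ihb => exact heart_ext hT hD iha ihb

private lemma key_lemma (hT : IsTStructure X Y) (hS : S ⊆ simplesOf (heart X Y)) :
    ∀ {t : C}, ExtClosureP S t → ∀ z : C, z ∈ heart X Y → z ∈ rPerp S →
      ∀ j : z ⟶ t, XMono X j → IsZero z := by
  intro t ht
  induction ht with
  | of s' hs' =>
    intro z hz hzp j hj
    obtain ⟨c, g', w', hD⟩ := distinguished_cocone_triangle j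
    have hc : c ∈ heart X Y := cone_mem_heart hT hz (hS hs').1 hD hj
    rcases (hS hs').2.2 z c j g' w' hz hc hD with h0 | h0
    · exact h0
    · have : IsIso j := (Triangle.isZero₃_iff_isIso₁ _ hD).1 h0
      rw [IsZero.iff_id_eq_zero, ← IsIso.hom_inv_id j, hzp s' hs' (inv j), comp_zero]
  | zero tt htt =>
    intro z hz hzp j hj
    rw [IsZero.iff_id_eq_zero]
    exact hj z hz.1 (𝟙 z) (by rw [id_comp]; exact htt.eq_of_tgt j 0)
  | iso t1 t2 e ht1 ih =>
    intro z hz hzp j hj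
    refine ih z hz hzp (j ≫ e.inv) ?_
    intro x hx q hq
    refine hj x hx q ?_
    have h1 : q ≫ j = (q ≫ (j ≫ e.inv)) ≫ e.hom := by simp
    rw [h1, hq, zero_comp]
  | ext t1 tt t2 e p r hE hp1 hp2 ih1 ih2 =>
    intro z hz hzp j hj
    have ht2H : t2 ∈ heart X Y := extClosureP_mem_heart hT hS hp2
    obtain ⟨ck, g', w', hCk⟩ := distinguished_cocone_triangle (j ≫ p)
    have hD : (Triangle.mk (j ≫ p) g' w').invRotate ∈ distTriang C :=
      inv_rot_of_distTriang _ hCk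
    set D := (Triangle.mk (j ≫ p) g' w').invRotate with hDdef
    obtain ⟨xF, yF, α, β, γ, hxF, hyF, hG⟩ := hT.gen (ck⟦(-1:ℤ)⟧)
    have hDmor₁ : XMono X D.mor₁ :=
      xMono_mor₁ hD (fun x hx r' => hom_X_heart_neg hT hx ht2H (by norm_num) r')
    have hαmono : XMono X α :=
      xMono_mor₁ hG (fun x hx r' => hom_X_Y_shift hT hx hyF (by norm_num) r')
    have hμmono : XMono X (α ≫ D.mor₁) := by
      intro x hx q hq
      have h1' : q ≫ α = 0 :=
        hDmor₁ x hx (q ≫ α) (by erw [assoc]; erw [← assoc] at hq ⊢; exact hq)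
      exact hαmono x hx q h1'
    have hxFheart : xF ∈ heart X Y := by
      refine mem_heart_of hT hxF (mem_Y_of_vanish hT ?_)
      intro x hx q
      refine vanish_obj₁_shift hG (fun r' => ?_) (fun r' => ?_) q
      · exact vanish_obj₁_shift hD
          (fun r'' => hom_X_heart_neg hT hx hz (by norm_num) r'')
          (fun r'' => hom_X_heart_neg1_neg1 hT hx ht2H r'') r'
      · exact hom_X_Y_neg1_neg1 hT hx hyF r'
    have hxFperp : xF ∈ rPerp S := by
      intro s' hs' q
      exact hμmono s' (hS hs').1.1 q (hzp s' hs' _)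
    have hfact : (D.mor₁ ≫ j) ≫ p = 0 := by
      erw [assoc]; exact comp_distTriang_mor_zero₁₂ _ hD
    obtain ⟨m', hm'⟩ := Triangle.coyoneda_exact₂ _ hE (D.mor₁ ≫ j) hfact
    have hνmono : XMono X (α ≫ m') := by
      intro x hx q hq
      have hq1 : ((q ≫ α) ≫ D.mor₁) ≫ j = 0 := by
        have h2 : ((q ≫ α) ≫ D.mor₁) ≫ j = (q ≫ (α ≫ m')) ≫ e := by
          erw [assoc (q ≫ α), hm']
          erw [assoc, assoc, assoc]; rfl
        erw [h2, hq, zero_comp]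
      have h3 : (q ≫ α) ≫ D.mor₁ = 0 := hj x hx _ hq1
      exact hμmono x hx q (by erw [← assoc]; exact h3)
    have hxF0 : IsZero xF := ih1 xF hxFheart hxFperp (α ≫ m') hνmono
    have hkmono : XMono X (j ≫ p) := by
      intro x hx q hq
      obtain ⟨q', hq'⟩ := Triangle.coyoneda_exact₂ _ hD q hq
      have hq'0 : q' = 0 := by
        obtain ⟨rr, hrr⟩ := Triangle.coyoneda_exact₂ _ hG q' (hT.hom hx hyF _)
        erw [hrr, hxF0.eq_of_tgt rr 0, zero_comp]; rfl
      rw [hq', hq'0, zero_comp]; rfl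
    exact ih2 z hz hzp (j ≫ p) hkmono

end Proof4

open ZeroObject in
/-- for each `s ∈ S`, `s[-1]` is simple in the right simple tilt
`K = (S^⊥ ∩ H) * ⟨S⟩[-1]`. -/
theorem shifted_simples_are_simple {X Y : Set C} (hXY : IsLengthHeart X Y)
    {S : Set C} (hS : S ⊆ simplesOf (heart X Y)) :
    ∀ s ∈ S, IsSimpleIn
      (star (rPerp S ∩ heart X Y) (shiftSet (extClosure S) (-1)))
      ((shiftFunctor C (-1 : ℤ)).obj s) := by
  obtain ⟨hT, hbdd, hlen⟩ := hXY
  intro s hs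
  obtain ⟨hsH, hsNZ, hsSimp⟩ := hS hs
  refine ⟨?_, ?_, ?_⟩
  · exact ⟨0, s⟦(-1:ℤ)⟧, 0, 𝟙 _, 0,
      ⟨fun s' _ f => (isZero_zero C).eq_of_tgt f 0, zero_mem_heart hT (isZero_zero C)⟩,
      ⟨s, ExtClosureP.of s hs, ⟨Iso.refl _⟩⟩, contractible_distinguished₁ _⟩
  · intro h0
    exact hsNZ (IsZero.of_iso ((shiftFunctor C (1:ℤ)).map_isZero h0)
      ((shiftFunctorCompIsoId C (-1:ℤ) (1:ℤ) (by ring)).symm.app s))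
  · intro a b f g w ha hb hTri
    obtain ⟨fa, ta', ia, pa, qa, hfaF, ⟨ta, hta, ⟨eaIso⟩⟩, hTa⟩ := ha
    obtain ⟨fb, tb', ib, pb, qb, hfbF, ⟨tb, htb, ⟨ebIso⟩⟩, hTb⟩ := hb
    have htaH : ta ∈ heart X Y := extClosureP_mem_heart hT hS hta
    have htbH : tb ∈ heart X Y := extClosureP_mem_heart hT hS htb
    have hbneg : ∀ x ∈ X, ∀ r0 : x ⟶ b⟦(-1:ℤ)⟧, r0 = 0 := by
      intro x hx r0
      refine vanish_obj₂_shift hTb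
        (fun r1 => hom_X_heart_neg hT hx hfbF.2 (by norm_num) r1) (fun r1 => ?_) r0
      exact eq_zero_of_comp_iso_hom (((shiftFunctor C (-1:ℤ)).mapIso ebIso).symm)
        (hom_X_heart_neg1_neg1 hT hx htbH _)
    have hXf : XMono X f := xMono_mor₁ hTri hbneg
    have hXia : XMono X ia := xMono_mor₁ hTa (fun x hx r1 =>
      eq_zero_of_comp_iso_hom (((shiftFunctor C (-1:ℤ)).mapIso eaIso).symm)
        (hom_X_heart_neg1_neg1 hT hx htaH _))
    have hia0 : ia = 0 :=
      hXf fa hfaF.2.1 ia (hom_X_heart_neg hT hfaF.2.1 hsH (by norm_num) (ia ≫ f))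
    have hfa0 : IsZero fa := by
      rw [IsZero.iff_id_eq_zero]
      exact hXia fa hfaF.2.1 (𝟙 fa) (by rw [id_comp, hia0])
    haveI hpaIso : IsIso pa := (Triangle.isZero₁_iff_isIso₂ _ hTa).1 hfa0
    have κa : a ≅ ta⟦(-1:ℤ)⟧ := asIso pa ≪≫ eaIso.symm
    have ιa : a⟦(1:ℤ)⟧ ≅ ta := (shiftFunctor C (1:ℤ)).mapIso κa ≪≫
      (shiftFunctorCompIsoId C (-1:ℤ) (1:ℤ) (by ring)).app ta
    have hXw : XMono X w := xMono_mor₃ hTri (fun x hx r1 =>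
      hom_X_heart_neg hT hx hsH (by norm_num) r1)
    have hXib : XMono X ib := xMono_mor₁ hTb (fun x hx r1 =>
      eq_zero_of_comp_iso_hom (((shiftFunctor C (-1:ℤ)).mapIso ebIso).symm)
        (hom_X_heart_neg1_neg1 hT hx htbH _))
    have hjb : XMono X (ib ≫ w ≫ ιa.hom) := by
      intro x hx q hq
      have h1 : (q ≫ ib) ≫ w = 0 := by
        refine eq_zero_of_comp_iso_hom ιa ?_
        simpa only [assoc] using hq
      exact hXib x hx q (hXw x hx (q ≫ ib) h1)
    have hfb0 : IsZero fb :=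
      key_lemma hT hS hta fb hfbF.2 hfbF.1 (ib ≫ w ≫ ιa.hom) hjb
    haveI hpbIso : IsIso pb := (Triangle.isZero₁_iff_isIso₂ _ hTb).1 hfb0
    have κb : b ≅ tb⟦(-1:ℤ)⟧ := asIso pb ≪≫ ebIso.symm
    have ιb : b⟦(1:ℤ)⟧ ≅ tb := (shiftFunctor C (1:ℤ)).mapIso κb ≪≫
      (shiftFunctorCompIsoId C (-1:ℤ) (1:ℤ) (by ring)).app tb
    have hTsh : (Triangle.shiftFunctor C (1:ℤ)).obj (Triangle.mk f g w) ∈ distTriang C := by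
      simpa using Triangle.shift_distinguished _ hTri (1:ℤ)
    set Tsh := (Triangle.shiftFunctor C (1:ℤ)).obj (Triangle.mk f g w) with hTshdef
    have σ : (s⟦(-1:ℤ)⟧)⟦(1:ℤ)⟧ ≅ s :=
      (shiftFunctorCompIsoId C (-1:ℤ) (1:ℤ) (by ring)).app s
    set u := ιa.inv ≫ Tsh.mor₁ ≫ σ.hom with hu
    set v := σ.inv ≫ Tsh.mor₂ ≫ ιb.hom with hv
    set zm := ιb.inv ≫ Tsh.mor₃ ≫ (shiftFunctor C (1:ℤ)).map ιa.hom with hzm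
    have hV : Triangle.mk u v zm ∈ distTriang C := by
      refine isomorphic_distinguished _ hTsh _ ?_
      refine Triangle.isoMk _ _ ιa.symm σ.symm ιb.symm ?_ ?_ ?_
      · dsimp; rw [hu]; erw [assoc, assoc, Iso.hom_inv_id, comp_id]; rfl
      · dsimp; rw [hv]; erw [assoc, assoc, Iso.hom_inv_id, comp_id]; rfl
      · dsimp; rw [hzm]; erw [assoc, assoc, ← Functor.map_comp, Iso.hom_inv_id, CategoryTheory.Functor.map_id, comp_id]; rfl
    rcases hsSimp ta tb u v zm htaH htbH hV with h0 | h0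
    · exact Or.inl (IsZero.of_iso ((shiftFunctor C (-1:ℤ)).map_isZero h0) κa)
    · exact Or.inr (IsZero.of_iso ((shiftFunctor C (-1:ℤ)).map_isZero h0) κb)
end SMPaper
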